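/- For every integer 1 ≤ l ≤ n−1, the K-span in B_n^(2) of the images of all words of length n−l in the generators has dimension binom(n, l−1) · ( (l−1) + Σ_{i=0}^{n−l−2} (i+l)·2^i ), where the sum is understood as 0 when n−l−2 < 0. Moreover, every word of length at least n in the generators lies in the defining ideal I_n, so the homogeneous components of B_n^(2) of degree ≥ n vanish; in particular the top nonvanishing degree of B_n^(2) is n−1. -/

import Mathlib

/-!
Statement 3: dimensions of the graded components of the monomial algebra `B_n^(2)`,
and vanishing in degrees ≥ n.
-/

noncomputable section

/-- Index type for the generators `r_{ij}^m` of `B_n^(2)`: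
`1 ≤ i < j ≤ n`, `m ∈ {1,…,n} ∖ {i,j}`.  An element is `(i, j, m)`. -/
abbrev B2Idx (n : ℕ) : Type :=
  {x : ℕ × ℕ × ℕ //
    x.1 ∈ Finset.Icc 1 n ∧ x.2.1 ∈ Finset.Icc 1 n ∧ x.2.2 ∈ Finset.Icc 1 n ∧
    x.1 < x.2.1 ∧ x.2.2 ≠ x.1 ∧ x.2.2 ≠ x.2.1}

variable (K : Type) [Field K] (n : ℕ)

/-- The generating set of the defining (monomial) ideal `I_n` of `B_n^(2)`:
all products `r_{ij}^m r_{ab}^l` such that NOT `[j = a ∧ (l = m ∨ l = i)]`. -/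
def b2Rels : Set (FreeAlgebra K (B2Idx n)) :=
  {x | ∃ g1 g2 : B2Idx n,
      ¬(g2.1.1 = g1.1.2.1 ∧ (g2.1.2.2 = g1.1.2.2 ∨ g2.1.2.2 = g1.1.1)) ∧
      x = FreeAlgebra.ι K g1 * FreeAlgebra.ι K g2}

/-- The relation presenting `B_n^(2)` as a `RingQuot`. -/
def b2Rel : FreeAlgebra K (B2Idx n) → FreeAlgebra K (B2Idx n) → Prop :=
  fun a b => a ∈ b2Rels K n ∧ b = 0

/-- The monomial algebra `B_n^(2)`. -/
abbrev B2Alg := RingQuot (b2Rel K n)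

/-- The image in `B_n^(2)` of a word in the generators. -/
def wordImage (w : List (B2Idx n)) : B2Alg K n :=
  RingQuot.mkAlgHom K (b2Rel K n) ((w.map (FreeAlgebra.ι K)).prod)

/-- The degree-`d` homogeneous component of `B_n^(2)`: the span of images of words of
length `d` in the generators. -/
def W (d : ℕ) : Submodule K (B2Alg K n) :=
  Submodule.span K {x | ∃ w : List (B2Idx n), w.length = d ∧ x = wordImage K n w}

-- ### auxiliary development

/-- the "good adjacency" relation -/
def PG {n : ℕ} (g1 g2 : B2Idx n) : Prop :=
  g2.1.1 = g1.1.2.1 ∧ (g2.1.2.2 = g1.1.2.2 ∨ g2.1.2.2 = g1.1.1)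

instance {n : ℕ} : DecidableRel (PG (n := n)) := fun _ _ => by
  unfold PG; infer_instance

instance B2Idx.fintype : Fintype (B2Idx n) := by
  have : ∀ x : B2Idx n, x.1 ∈ (Finset.Icc 1 n) ×ˢ ((Finset.Icc 1 n) ×ˢ (Finset.Icc 1 n)) := by
    rintro ⟨⟨i, j, m⟩, h1, h2, h3, _⟩
    simp [Finset.mem_product, h1, h2, h3]
  exact Fintype.ofInjective
    (fun x : B2Idx n => (⟨x.1, this x⟩ : {y // y ∈ (Finset.Icc 1 n) ×ˢ ((Finset.Icc 1 n) ×ˢ (Finset.Icc 1 n))}))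
    (fun a b hab => Subtype.ext (by simpa using congrArg Subtype.val hab))

instance {α : Type} (R : α → α → Prop) [DecidableRel R] (l : List α) :
    Decidable (l.Chain' R) :=
  inferInstanceAs (Decidable (l.IsChain R))

abbrev GW (n : ℕ) : Type := {w : List (B2Idx n) // w.Chain' PG}

abbrev VV (K : Type) [Field K] (n : ℕ) := GW n →₀ K

def fEnd (g : B2Idx n) : Module.End K (VV K n) :=
  Finsupp.lift (VV K n) K (GW n) (fun w =>
    if h : (g :: w.1).Chain' PG then Finsupp.single ⟨g :: w.1, h⟩ 1 else 0)

lemma fEnd_single (g : B2Idx n) (w : GW n) :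
    fEnd K n g (Finsupp.single w 1) =
      if h : (g :: w.1).Chain' PG then Finsupp.single ⟨g :: w.1, h⟩ 1 else 0 := by
  simp [fEnd]

def phi : FreeAlgebra K (B2Idx n) →ₐ[K] Module.End K (VV K n) :=
  FreeAlgebra.lift K (fEnd K n)

lemma phi_rel : ∀ ⦃x y⦄, b2Rel K n x y → phi K n x = phi K n y := by
  rintro x y ⟨⟨g1, g2, hbad, rfl⟩, rfl⟩
  rw [map_mul, map_zero]
  refine Finsupp.lhom_ext' fun w => LinearMap.ext_ring ?_
  simp only [LinearMap.comp_apply, Module.End.mul_apply, LinearMap.zero_apply, phi,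
    FreeAlgebra.lift_ι_apply, Finsupp.lsingle_apply]
  rw [fEnd_single]
  split_ifs with h2
  · rw [fEnd_single]
    split_ifs with h1
    · exact absurd ((List.isChain_cons_cons.1 h1).1) hbad
    · rfl
  · simp

def psi : B2Alg K n →ₐ[K] Module.End K (VV K n) :=
  RingQuot.liftAlgHom K ⟨phi K n, phi_rel K n⟩

def emptyGW : GW n := ⟨[], List.isChain_nil⟩

def Lmap : B2Alg K n →ₗ[K] VV K n where
  toFun x := psi K n x (Finsupp.single (emptyGW n) 1)
  map_add' x y := by simp only [map_add]; rfl
  map_smul' c x := by simp only [map_smul]; rfl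

lemma prod_fEnd_apply (w : List (B2Idx n)) :
    (w.map (fEnd K n)).prod (Finsupp.single (emptyGW n) 1) =
      if h : w.Chain' PG then Finsupp.single ⟨w, h⟩ 1 else 0 := by
  induction w with
  | nil => simp [emptyGW, show List.Chain' PG ([] : List (B2Idx n)) from List.isChain_nil]
  | cons g t ih =>
    rw [List.map_cons, List.prod_cons, Module.End.mul_apply, ih]
    by_cases h2 : t.Chain' PG
    · rw [dif_pos h2, fEnd_single]
    · rw [dif_neg h2, map_zero, dif_neg (fun (h1 : (g :: t).Chain' PG) => h2 (List.isChain_cons.1 h1).2)]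

lemma Lmap_wordImage (w : List (B2Idx n)) :
    Lmap K n (wordImage K n w) =
      if h : w.Chain' PG then Finsupp.single ⟨w, h⟩ 1 else 0 := by
  have : psi K n (wordImage K n w) = (w.map (fEnd K n)).prod := by
    rw [wordImage, psi, RingQuot.liftAlgHom_mkAlgHom_apply, map_list_prod, List.map_map]
    congr 1
    ext g
    simp [phi, Function.comp]
  show psi K n (wordImage K n w) (Finsupp.single (emptyGW n) 1) = _
  rw [this, prod_fEnd_apply]

/-- a word that is not a chain contains a bad adjacent pair -/
lemma exists_bad_pair {α : Type*} {P : α → α → Prop} :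
    ∀ w : List α, ¬ w.Chain' P → ∃ u a b v, w = u ++ a :: b :: v ∧ ¬ P a b
  | [], h => absurd List.isChain_nil h
  | [x], h => absurd (List.isChain_singleton x) h
  | a :: b :: t, h => by
    by_cases hab : P a b
    · have ht : ¬ (b :: t).Chain' P := fun hc => h (List.isChain_cons_cons.2 ⟨hab, hc⟩)
      obtain ⟨u, a', b', v, heq, hbad⟩ := exists_bad_pair (b :: t) ht
      exact ⟨a :: u, a', b', v, by rw [heq]; rfl, hbad⟩
    · exact ⟨[], a, b, t, rfl, hab⟩

lemma wordImage_eq_zero {w : List (B2Idx n)} (hw : ¬ w.Chain' PG) :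
    wordImage K n w = 0 := by
  obtain ⟨u, a, b, v, rfl, hbad⟩ := exists_bad_pair w hw
  have hrel : b2Rel K n (FreeAlgebra.ι K a * FreeAlgebra.ι K b) 0 :=
    ⟨⟨a, b, hbad, rfl⟩, rfl⟩
  have hz : RingQuot.mkAlgHom K (b2Rel K n) (FreeAlgebra.ι K a * FreeAlgebra.ι K b) = 0 := by
    rw [RingQuot.mkAlgHom_rel K hrel, map_zero]
  have hsplit : ((u ++ a :: b :: v).map (FreeAlgebra.ι K)).prod =
      (u.map (FreeAlgebra.ι K)).prod *
        ((FreeAlgebra.ι K a * FreeAlgebra.ι K b) * (v.map (FreeAlgebra.ι K)).prod) := by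
    simp [List.prod_append, mul_assoc]
  rw [wordImage, hsplit, map_mul, map_mul, hz, zero_mul, mul_zero]

/-- heads of good chains bound the length -/
lemma chain_head_bound : ∀ (w : List (B2Idx n)) (g : B2Idx n),
    (g :: w).Chain' PG → g.1.1 + (g :: w).length ≤ n
  | [], g, _ => by
    have h1 : g.1.1 < g.1.2.1 := g.2.2.2.2.1
    have h2 : g.1.2.1 ≤ n := (Finset.mem_Icc.1 g.2.2.1).2
    simpa using h1.trans_le h2
  | g' :: t, g, h => by
    obtain ⟨hpg, ht⟩ := List.isChain_cons_cons.1 h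
    have ih := chain_head_bound t g' ht
    have h1 : g.1.1 < g.1.2.1 := g.2.2.2.2.1
    have h2 : g'.1.1 = g.1.2.1 := hpg.1
    have : g.1.1 + 1 ≤ g'.1.1 := by omega
    simp only [List.length_cons] at ih ⊢
    omega

lemma not_chain_of_long {w : List (B2Idx n)} (hn : 1 ≤ n) (hw : n ≤ w.length) :
    ¬ w.Chain' PG := by
  intro hc
  cases w with
  | nil => simp only [List.length_nil] at hw; omega
  | cons g t =>
    have := chain_head_bound n t g hc
    have h1 : 1 ≤ g.1.1 := (Finset.mem_Icc.1 g.2.1).1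
    simp only [List.length_cons] at this hw
    omega

-- ## Part 2: rank of the degree-d component

abbrev GWd (n d : ℕ) : Type := {w : List (B2Idx n) // w.Chain' PG ∧ w.length = d}

instance (d : ℕ) : Fintype (GWd n d) :=
  @Fintype.ofInjective _ _ (inferInstance : Fintype (List.Vector (B2Idx n) d))
    (fun w : GWd n d => (⟨w.1, w.2.2⟩ : List.Vector (B2Idx n) d))
    (fun a b hab => Subtype.ext (by simpa [List.Vector] using congrArg Subtype.val hab))

lemma W_eq_span (d : ℕ) :
    W K n d = Submodule.span K (Set.range fun w : GWd n d => wordImage K n w.1) := by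
  apply le_antisymm
  · rw [W, Submodule.span_le]
    rintro x ⟨w, hlen, rfl⟩
    by_cases hc : w.Chain' PG
    · exact Submodule.subset_span ⟨⟨w, hc, hlen⟩, rfl⟩
    · rw [wordImage_eq_zero K n hc]
      exact Submodule.zero_mem _
  · rw [Submodule.span_le]
    rintro x ⟨w, rfl⟩
    exact Submodule.subset_span ⟨w.1, w.2.2, rfl⟩

lemma linIndep (d : ℕ) :
    LinearIndependent K fun w : GWd n d => wordImage K n w.1 := by
  have hcomp : ∀ w : GWd n d,
      Lmap K n (wordImage K n w.1) = Finsupp.single (⟨w.1, w.2.1⟩ : GW n) 1 := by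
    intro w
    rw [Lmap_wordImage, dif_pos w.2.1]
  have hsingle : LinearIndependent K fun w : GWd n d =>
      Finsupp.single (⟨w.1, w.2.1⟩ : GW n) (1 : K) := by
    have hb := (Finsupp.basisSingleOne (R := K) (ι := GW n)).linearIndependent
    have hinj : Function.Injective (fun w : GWd n d => (⟨w.1, w.2.1⟩ : GW n)) := by
      intro a b hab
      exact Subtype.ext (by simpa using congrArg Subtype.val hab)
    have := hb.comp _ hinj
    simpa [Finsupp.basisSingleOne, Function.comp_def] using this
  apply LinearIndependent.of_comp (Lmap K n)
  have : (Lmap K n ∘ fun w : GWd n d => wordImage K n w.1) =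
      fun w : GWd n d => Finsupp.single (⟨w.1, w.2.1⟩ : GW n) (1 : K) := by
    funext w; exact hcomp w
  rw [this]
  exact hsingle

lemma finrank_W (d : ℕ) :
    Module.finrank K (W K n d) = Fintype.card (GWd n d) := by
  rw [W_eq_span]
  exact finrank_span_eq_card (linIndep K n d)

-- ## Part 3: counting good words

/-- extensions at the front of a reversed word -/
def extF : List (B2Idx n) → Finset (B2Idx n)
  | [] => Finset.univ
  | g' :: _ => Finset.univ.filter (fun g => PG g' g)

/-- reversed good words of length d -/
def GFin : ℕ → Finset (List (B2Idx n))
  | 0 => {[]}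
  | d + 1 => (GFin d).biUnion (fun w => (extF n w).image (fun g => g :: w))

/-- the reversed relation -/
def Rv {n : ℕ} (g g' : B2Idx n) : Prop := PG g' g

instance {n : ℕ} : DecidableRel (Rv (n := n)) := fun _ _ => by unfold Rv; infer_instance

lemma mem_extF {w : List (B2Idx n)} {g : B2Idx n} :
    g ∈ extF n w ↔ ∀ g' ∈ w.head?, Rv g g' := by
  cases w with
  | nil => simp [extF]
  | cons g' t => simp [extF, Rv]

lemma mem_GFin : ∀ (d : ℕ) (w : List (B2Idx n)),
    w ∈ GFin n d ↔ w.Chain' Rv ∧ w.length = d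
  | 0, w => by
    constructor
    · intro h
      simp only [GFin, Finset.mem_singleton] at h
      subst h; exact ⟨List.isChain_nil, rfl⟩
    · rintro ⟨-, h⟩
      rw [List.length_eq_zero_iff] at h
      subst h; simp [GFin]
  | d + 1, w => by
    simp only [GFin, Finset.mem_biUnion, Finset.mem_image]
    constructor
    · rintro ⟨u, hu, g, hg, rfl⟩
      obtain ⟨hc, hl⟩ := (mem_GFin d u).1 hu
      exact ⟨List.isChain_cons.2 ⟨fun g' h' => (mem_extF n).1 hg g' h', hc⟩, by simp [hl]⟩
    · rintro ⟨hc, hl⟩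
      cases w with
      | nil => simp at hl
      | cons g u =>
        obtain ⟨h1, h2⟩ := List.isChain_cons.1 hc
        exact ⟨u, (mem_GFin d u).2 ⟨h2, by simpa using hl⟩, g, (mem_extF n).2 h1, rfl⟩

lemma card_filter_GFin_succ (d : ℕ) (p : List (B2Idx n) → Prop) [DecidablePred p] :
    ((GFin n (d + 1)).filter p).card =
      ∑ w ∈ GFin n d, ((extF n w).filter (fun g => p (g :: w))).card := by
  rw [GFin, Finset.filter_biUnion, Finset.card_biUnion]
  · refine Finset.sum_congr rfl fun w _ => ?_
    rw [Finset.filter_image, Finset.card_image_of_injective]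
    intro a b hab
    exact (List.cons.injEq _ _ _ _ ▸ hab).1
  · intro w1 h1 w2 h2 hne
    simp only [Finset.disjoint_left, Finset.mem_filter, Finset.mem_image]
    rintro x ⟨⟨g1, -, rfl⟩, -⟩ ⟨⟨g2, -, heq⟩, -⟩
    exact hne ((List.cons.injEq _ _ _ _ ▸ heq).2.symm ▸ rfl)


-- ### per-extension counts

lemma extF_nil_filter_jm (hn : 3 ≤ n) {j m : ℕ} (hjm : j < m) :
    ((extF n []).filter (fun g => g.1.2.1 = j ∧ g.1.2.2 = m)).card =
      if j ≤ n ∧ m ≤ n then j - 1 else 0 := by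
  split_ifs with hc
  · rw [← Nat.card_Ico 1 j]
    apply Finset.card_bij' (i := fun (g : B2Idx n) _ => g.1.1)
      (j := fun i hi => (⟨(i, j, m), by
        simp only [Finset.mem_Ico] at hi
        simp only [Finset.mem_Icc]
        omega⟩ : B2Idx n))
      (hi := by
        rintro ⟨⟨a, b, c⟩, hq⟩ hg
        simp only [extF, Finset.mem_filter, Finset.mem_univ, true_and] at hg
        simp only [Finset.mem_Icc] at hq
        simp only [Finset.mem_Ico]
        omega)
      (hj := by
        intro i hi
        simp [extF])
      (left_inv := by
        rintro ⟨⟨a, b, c⟩, hq⟩ hg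
        simp only [extF, Finset.mem_filter, Finset.mem_univ, true_and] at hg
        obtain ⟨h1, h2⟩ := hg
        subst h1 h2
        rfl)
      (right_inv := by intro i hi; rfl)
  · rw [Finset.card_eq_zero, Finset.eq_empty_iff_forall_notMem]
    rintro ⟨⟨a, b, c⟩, hq⟩ hg
    simp only [extF, Finset.mem_filter, Finset.mem_univ, true_and] at hg
    simp only [Finset.mem_Icc] at hq
    omega

lemma extF_nil_filter_j (hn : 3 ≤ n) (j : ℕ) :
    ((extF n []).filter (fun g => g.1.2.1 = j)).card =
      if j ≤ n then (j - 1) * (n - 2) else 0 := by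
  split_ifs with hc
  · rw [Finset.card_eq_sum_card_fiberwise
      (f := fun g : B2Idx n => g.1.1) (t := Finset.Ico 1 j) ?hmem]
    case hmem =>
      rintro ⟨⟨a, b, c⟩, hq⟩ hg
      simp only [Finset.mem_coe, extF, Finset.mem_filter, Finset.mem_univ, true_and] at hg
      simp only [Finset.mem_Icc] at hq
      simp only [Finset.mem_coe, Finset.mem_Ico]
      omega
    have hfib : ∀ i ∈ Finset.Ico 1 j,
        ((((extF n []).filter (fun g => g.1.2.1 = j)).filter
          (fun g => g.1.1 = i)).card) = n - 2 := by
      intro i hi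
      simp only [Finset.mem_Ico] at hi
      have hcard : (((Finset.Icc 1 n).erase i).erase j).card = n - 2 := by
        rw [Finset.card_erase_of_mem, Finset.card_erase_of_mem, Nat.card_Icc]
        · omega
        · simp only [Finset.mem_erase, Finset.mem_Icc]; omega
        · simp only [Finset.mem_erase, Finset.mem_Icc]; omega
      rw [← hcard]
      apply Finset.card_bij' (i := fun (g : B2Idx n) _ => g.1.2.2)
        (j := fun m hm => (⟨(i, j, m), by
          simp only [Finset.mem_erase, Finset.mem_Icc] at hm
          simp only [Finset.mem_Icc]
          omega⟩ : B2Idx n))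
        (hi := by
          rintro ⟨⟨a, b, c⟩, hq⟩ hg
          simp only [extF, Finset.mem_filter, Finset.mem_univ, true_and] at hg
          simp only [Finset.mem_Icc] at hq
          simp only [Finset.mem_erase, Finset.mem_Icc]
          omega)
        (hj := by
          intro m hm
          simp [extF])
        (left_inv := by
          rintro ⟨⟨a, b, c⟩, hq⟩ hg
          simp only [extF, Finset.mem_filter, Finset.mem_univ, true_and] at hg
          obtain ⟨h1, h2⟩ := hg
          subst h1 h2
          rfl)
        (right_inv := by intro m hm; rfl)
    rw [Finset.sum_congr rfl hfib, Finset.sum_const, Nat.card_Ico, smul_eq_mul]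
  · rw [Finset.card_eq_zero, Finset.eq_empty_iff_forall_notMem]
    rintro ⟨⟨a, b, c⟩, hq⟩ hg
    simp only [extF, Finset.mem_filter, Finset.mem_univ, true_and] at hg
    simp only [Finset.mem_Icc] at hq
    omega

def Jv : List (B2Idx n) → ℕ
  | [] => 0
  | g :: _ => g.1.2.1

def Mv : List (B2Idx n) → ℕ
  | [] => 0
  | g :: _ => g.1.2.2

@[simp] lemma Jv_cons (g : B2Idx n) (w : List (B2Idx n)) : Jv n (g :: w) = g.1.2.1 := rfl
@[simp] lemma Mv_cons (g : B2Idx n) (w : List (B2Idx n)) : Mv n (g :: w) = g.1.2.2 := rfl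

lemma extF_cons_filter_jm (g' : B2Idx n) (t : List (B2Idx n)) {j m : ℕ} (hjm : j < m) :
    ((extF n (g' :: t)).filter (fun g => g.1.2.1 = j ∧ g.1.2.2 = m)).card =
      if g'.1.2.1 < j ∧ j ≤ n ∧ g'.1.2.2 = m then 1 else 0 := by
  obtain ⟨⟨i', j', m'⟩, hp⟩ := g'
  simp only [Finset.mem_Icc] at hp
  split_ifs with hcond
  · simp only at hcond
    rw [Finset.card_eq_one]
    refine ⟨⟨(j', j, m'), by simp only [Finset.mem_Icc]; omega⟩, ?_⟩
    apply Finset.ext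
    rintro ⟨⟨a, b, c⟩, hq⟩
    simp only [Finset.mem_Icc] at hq
    simp only [extF, Finset.mem_filter, Finset.mem_univ, true_and, Finset.mem_singleton,
      Subtype.mk.injEq, Prod.mk.injEq]
    simp only [PG]
    omega
  · simp only at hcond
    rw [Finset.card_eq_zero, Finset.eq_empty_iff_forall_notMem]
    rintro ⟨⟨a, b, c⟩, hq⟩ hg
    simp only [Finset.mem_Icc] at hq
    simp only [extF, Finset.mem_filter, Finset.mem_univ, true_and] at hg
    simp only [PG] at hg
    omega

lemma extF_cons_filter_j (g' : B2Idx n) (t : List (B2Idx n)) (j : ℕ) :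
    ((extF n (g' :: t)).filter (fun g => g.1.2.1 = j)).card =
      if g'.1.2.1 < j ∧ j ≤ n then (if g'.1.2.2 = j then 1 else 2) else 0 := by
  obtain ⟨⟨i', j', m'⟩, hp⟩ := g'
  simp only [Finset.mem_Icc] at hp
  split_ifs with hcond hm
  · -- m' = j : only (j', j, i')
    simp only at hcond hm
    rw [Finset.card_eq_one]
    refine ⟨⟨(j', j, i'), by simp only [Finset.mem_Icc]; omega⟩, ?_⟩
    apply Finset.ext
    rintro ⟨⟨a, b, c⟩, hq⟩
    simp only [Finset.mem_Icc] at hq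
    simp only [extF, Finset.mem_filter, Finset.mem_univ, true_and, Finset.mem_singleton,
      Subtype.mk.injEq, Prod.mk.injEq]
    simp only [PG]
    omega
  · -- two elements
    simp only at hcond hm
    have h2 : (({⟨(j', j, m'), by simp only [Finset.mem_Icc]; omega⟩,
        ⟨(j', j, i'), by simp only [Finset.mem_Icc]; omega⟩} : Finset (B2Idx n))).card = 2 := by
      rw [Finset.card_insert_of_notMem, Finset.card_singleton]
      simp only [Finset.mem_singleton, Subtype.mk.injEq, Prod.mk.injEq]
      omega
    rw [← h2]
    congr 1
    apply Finset.ext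
    rintro ⟨⟨a, b, c⟩, hq⟩
    simp only [Finset.mem_Icc] at hq
    simp only [extF, Finset.mem_filter, Finset.mem_univ, true_and, Finset.mem_insert,
      Finset.mem_singleton, Subtype.mk.injEq, Prod.mk.injEq]
    simp only [PG]
    omega
  · simp only at hcond
    rw [Finset.card_eq_zero, Finset.eq_empty_iff_forall_notMem]
    rintro ⟨⟨a, b, c⟩, hq⟩ hg
    simp only [Finset.mem_Icc] at hq
    simp only [extF, Finset.mem_filter, Finset.mem_univ, true_and] at hg
    simp only [PG] at hg
    omega

lemma sum_range_choose_eq (m d : ℕ) :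
    ∑ i ∈ Finset.range m, i.choose d = m.choose (d + 1) := by
  induction m with
  | zero => simp
  | succ m ih =>
    rw [Finset.sum_range_succ, ih, Nat.choose_succ_succ, Nat.add_comm]

lemma sum_range_choose_pred {d : ℕ} (hd : 1 ≤ d) (j : ℕ) :
    ∑ j' ∈ Finset.range j, (j' - 1).choose d = (j - 1).choose (d + 1) := by
  cases j with
  | zero => simp [Nat.choose_eq_zero_of_lt (by omega : 0 < d + 1)]
  | succ j0 =>
    rw [Finset.sum_range_succ']
    simp only [Nat.add_sub_cancel, Nat.succ_sub_one]
    rw [sum_range_choose_eq]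
    have : (0 - 1).choose d = 0 := Nat.choose_eq_zero_of_lt (by omega)
    rw [this, Nat.add_zero]

/-- number of admissible superscript sequences -/
def fD (n d : ℕ) : ℕ := (n - 3) * 2 ^ (d - 1) + 1

def Hc (d j m : ℕ) : ℕ := ((GFin n d).filter (fun w => Jv n w = j ∧ Mv n w = m)).card

def Fc (d j : ℕ) : ℕ := ((GFin n d).filter (fun w => Jv n w = j)).card

lemma Hc_formula (hn : 3 ≤ n) : ∀ d, 1 ≤ d → ∀ j m, j < m → m ≤ n →
    Hc n d j m = if j ≤ n then (j - 1).choose d else 0 := by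
  intro d hd
  induction d, hd using Nat.le_induction with
  | base =>
    intro j m hjm hm
    rw [Hc, show (1 : ℕ) = 0 + 1 from rfl, card_filter_GFin_succ]
    rw [show GFin n 0 = {[]} from rfl, Finset.sum_singleton]
    simp only [Jv_cons, Mv_cons]
    erw [extF_nil_filter_jm n hn hjm]
    rw [Nat.choose_one_right]
    split_ifs with h1 h2 h2 <;> first | rfl | omega
  | succ d hd ih =>
    intro j m hjm hm
    rw [Hc, card_filter_GFin_succ]
    have hterm : ∀ w ∈ GFin n d,
        ((extF n w).filter (fun g => Jv n (g :: w) = j ∧ Mv n (g :: w) = m)).card =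
          if Jv n w < j ∧ j ≤ n ∧ Mv n w = m then 1 else 0 := by
      intro w hw
      obtain ⟨hc, hl⟩ := (mem_GFin n d w).1 hw
      cases w with
      | nil => simp at hl; omega
      | cons g' t =>
        simp only [Jv_cons, Mv_cons]
        exact extF_cons_filter_jm n g' t hjm
    rw [Finset.sum_congr rfl hterm, ← Finset.card_filter]
    by_cases hjn : j ≤ n
    · rw [if_pos hjn]
      have hsplit : (GFin n d).filter (fun w => Jv n w < j ∧ j ≤ n ∧ Mv n w = m) =
          (GFin n d).filter (fun w => Jv n w < j ∧ Mv n w = m) := by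
        apply Finset.filter_congr
        intro w hw
        simp [hjn]
      rw [hsplit]
      rw [Finset.card_eq_sum_card_fiberwise
        (f := fun w => Jv n w) (t := Finset.range j)
        (fun w hw => by simp only [Finset.mem_coe, Finset.mem_filter] at hw; simp [hw.2.1])]
      have hfib : ∀ j' ∈ Finset.range j,
          (((GFin n d).filter (fun w => Jv n w < j ∧ Mv n w = m)).filter
            (fun w => Jv n w = j')).card = (j' - 1).choose d := by
        intro j' hj'
        simp only [Finset.mem_range] at hj'
        have : ((GFin n d).filter (fun w => Jv n w < j ∧ Mv n w = m)).filter
            (fun w => Jv n w = j') = (GFin n d).filter (fun w => Jv n w = j' ∧ Mv n w = m) := by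
          rw [Finset.filter_filter]
          apply Finset.filter_congr
          intro w hw
          constructor
          · rintro ⟨⟨-, h2⟩, h3⟩; exact ⟨h3, h2⟩
          · rintro ⟨h1, h2⟩; exact ⟨⟨by omega, h2⟩, h1⟩
        rw [this]
        have := ih j' m (by omega) hm
        rw [Hc] at this
        rw [this, if_pos (by omega)]
      rw [Finset.sum_congr rfl hfib, sum_range_choose_pred (by omega)]
    · rw [if_neg hjn]
      rw [Finset.card_eq_zero, Finset.eq_empty_iff_forall_notMem]
      intro w hw
      simp only [Finset.mem_filter] at hw
      omega

lemma Fc_formula (hn : 3 ≤ n) : ∀ d, 1 ≤ d → ∀ j,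
    Fc n d j = if j ≤ n then (j - 1).choose d * fD n d else 0 := by
  intro d hd
  induction d, hd using Nat.le_induction with
  | base =>
    intro j
    rw [Fc, show (1 : ℕ) = 0 + 1 from rfl, card_filter_GFin_succ]
    rw [show GFin n 0 = {[]} from rfl, Finset.sum_singleton]
    simp only [Jv_cons]
    erw [extF_nil_filter_j n hn j, Nat.choose_one_right]
    have : fD n 1 = n - 2 := by
      rw [fD]
      simp
      omega
    rw [this]
  | succ d hd ih =>
    intro j
    rw [Fc, card_filter_GFin_succ]
    have hterm : ∀ w ∈ GFin n d,
        ((extF n w).filter (fun g => Jv n (g :: w) = j)).card =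
          (if Jv n w < j ∧ j ≤ n ∧ Mv n w = j then 1 else 0) +
          (if Jv n w < j ∧ j ≤ n ∧ ¬ Mv n w = j then 2 else 0) := by
      intro w hw
      obtain ⟨hc, hl⟩ := (mem_GFin n d w).1 hw
      cases w with
      | nil => simp at hl; omega
      | cons g' t =>
        simp only [Jv_cons, Mv_cons]
        show _ = (if g'.1.2.1 < j ∧ j ≤ n ∧ g'.1.2.2 = j then 1 else 0) + (if g'.1.2.1 < j ∧ j ≤ n ∧ ¬ g'.1.2.2 = j then 2 else 0)
        erw [extF_cons_filter_j n g' t j]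
        split_ifs <;> omega
    rw [Finset.sum_congr rfl hterm, Finset.sum_add_distrib, ← Finset.card_filter]
    have h2 : ∀ w ∈ GFin n d,
        (if Jv n w < j ∧ j ≤ n ∧ ¬ Mv n w = j then 2 else 0) =
        2 * (if Jv n w < j ∧ j ≤ n ∧ ¬ Mv n w = j then 1 else 0) := by
      intro w hw; split_ifs <;> rfl
    rw [Finset.sum_congr rfl h2, ← Finset.mul_sum, ← Finset.card_filter]
    by_cases hjn : j ≤ n
    · -- main case
      -- first card: equals (j-1).choose (d+1)
      have hA : ((GFin n d).filter (fun w => Jv n w < j ∧ j ≤ n ∧ Mv n w = j)).card =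
          (j - 1).choose (d + 1) := by
        rw [Finset.card_eq_sum_card_fiberwise
          (f := fun w => Jv n w) (t := Finset.range j)
          (fun w hw => by simp only [Finset.mem_coe, Finset.mem_filter] at hw; simp [hw.2.1])]
        have hfib : ∀ j' ∈ Finset.range j,
            (((GFin n d).filter (fun w => Jv n w < j ∧ j ≤ n ∧ Mv n w = j)).filter
              (fun w => Jv n w = j')).card = (j' - 1).choose d := by
          intro j' hj'
          simp only [Finset.mem_range] at hj'
          have heq : ((GFin n d).filter (fun w => Jv n w < j ∧ j ≤ n ∧ Mv n w = j)).filter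
              (fun w => Jv n w = j') =
              (GFin n d).filter (fun w => Jv n w = j' ∧ Mv n w = j) := by
            rw [Finset.filter_filter]
            apply Finset.filter_congr
            intro w hw
            constructor
            · rintro ⟨⟨-, -, h3⟩, h4⟩; exact ⟨h4, h3⟩
            · rintro ⟨h1, h2⟩; exact ⟨⟨by omega, hjn, h2⟩, h1⟩
          rw [heq]
          have := Hc_formula n hn d hd j' j (by omega) hjn
          rw [Hc] at this
          rw [this, if_pos (by omega)]
        rw [Finset.sum_congr rfl hfib, sum_range_choose_pred (by omega)]
      -- card of (Jv < j ∧ j ≤ n): equals (j-1).choose (d+1) * fD n d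
      have hB : ((GFin n d).filter (fun w => Jv n w < j ∧ j ≤ n)).card =
          (j - 1).choose (d + 1) * fD n d := by
        rw [Finset.card_eq_sum_card_fiberwise
          (f := fun w => Jv n w) (t := Finset.range j)
          (fun w hw => by simp only [Finset.mem_coe, Finset.mem_filter] at hw; simp [hw.2.1])]
        have hfib : ∀ j' ∈ Finset.range j,
            (((GFin n d).filter (fun w => Jv n w < j ∧ j ≤ n)).filter
              (fun w => Jv n w = j')).card = (j' - 1).choose d * fD n d := by
          intro j' hj'
          simp only [Finset.mem_range] at hj'
          have heq : ((GFin n d).filter (fun w => Jv n w < j ∧ j ≤ n)).filter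
              (fun w => Jv n w = j') = (GFin n d).filter (fun w => Jv n w = j') := by
            rw [Finset.filter_filter]
            apply Finset.filter_congr
            intro w hw
            constructor
            · rintro ⟨-, h2⟩; exact h2
            · intro h1; exact ⟨⟨by omega, hjn⟩, h1⟩
          rw [heq]
          have := ih j'
          rw [Fc] at this
          rw [this, if_pos (by omega)]
        rw [Finset.sum_congr rfl hfib, ← Finset.sum_mul, sum_range_choose_pred (by omega)]
      -- complement count
      have hC : ((GFin n d).filter (fun w => Jv n w < j ∧ j ≤ n ∧ ¬ Mv n w = j)).card =
          (j - 1).choose (d + 1) * fD n d - (j - 1).choose (d + 1) := by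
        have hsum := Finset.card_filter_add_card_filter_not
          (s := (GFin n d).filter (fun w => Jv n w < j ∧ j ≤ n)) (p := fun w => Mv n w = j)
        rw [Finset.filter_filter, Finset.filter_filter] at hsum
        have e1 : (GFin n d).filter (fun w => (Jv n w < j ∧ j ≤ n) ∧ Mv n w = j) =
            (GFin n d).filter (fun w => Jv n w < j ∧ j ≤ n ∧ Mv n w = j) := by
          apply Finset.filter_congr; intro w hw; tauto
        have e2 : (GFin n d).filter (fun w => (Jv n w < j ∧ j ≤ n) ∧ ¬ Mv n w = j) =
            (GFin n d).filter (fun w => Jv n w < j ∧ j ≤ n ∧ ¬ Mv n w = j) := by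
          apply Finset.filter_congr; intro w hw; tauto
        rw [e1, e2, hA, hB] at hsum
        omega
      rw [hA, hC, if_pos hjn]
      -- arithmetic: X + 2 * (X * fD - X) = X * fD(d+1), where fD(d+1) = 2 * fD d - 1
      have hfd : fD n (d + 1) = 2 * fD n d - 1 := by
        rw [fD, fD]
        have h1 : d + 1 - 1 = (d - 1) + 1 := by omega
        rw [h1, pow_succ]
        ring_nf
        omega
      have hge : (j - 1).choose (d + 1) * fD n d ≥ (j - 1).choose (d + 1) := by
        have : fD n d ≥ 1 := by rw [fD]; omega
        calc (j - 1).choose (d + 1) = (j - 1).choose (d + 1) * 1 := by ring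
          _ ≤ (j - 1).choose (d + 1) * fD n d := by
            exact Nat.mul_le_mul_left _ this
      have hfd1 : fD n d ≥ 1 := by rw [fD]; omega
      set X := (j - 1).choose (d + 1)
      rw [hfd]
      have : X * (2 * fD n d - 1) = 2 * (X * fD n d) - X := by
        rw [Nat.mul_sub, Nat.mul_one]
        ring_nf
      rw [this]
      omega
    · rw [if_neg hjn]
      have hz : ∀ (p : List (B2Idx n) → Prop) [DecidablePred p],
          ((GFin n d).filter (fun w => Jv n w < j ∧ j ≤ n ∧ p w)).card = 0 := by
        intro p _
        rw [Finset.card_eq_zero, Finset.eq_empty_iff_forall_notMem]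
        intro w hw
        simp only [Finset.mem_filter] at hw
        exact hjn hw.2.2.1
      rw [hz, hz]
      simp

lemma card_GFin (hn : 3 ≤ n) (d : ℕ) (hd : 1 ≤ d) :
    (GFin n d).card = n.choose (d + 1) * fD n d := by
  rw [Finset.card_eq_sum_card_fiberwise
    (f := fun w => Jv n w) (t := Finset.range (n + 1)) ?hmem]
  case hmem =>
    intro w hw
    obtain ⟨hc, hl⟩ := (mem_GFin n d w).1 hw
    cases w with
    | nil => simp at hl; omega
    | cons g' t =>
      have := (Finset.mem_Icc.1 g'.2.2.1).2
      simp only [Finset.mem_coe, Jv_cons, Finset.mem_range]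
      omega
  have hfib : ∀ j ∈ Finset.range (n + 1),
      ((GFin n d).filter (fun w => Jv n w = j)).card = (j - 1).choose d * fD n d := by
    intro j hj
    simp only [Finset.mem_range] at hj
    have := Fc_formula n hn d hd j
    rw [Fc] at this
    rw [this, if_pos (by omega)]
  rw [Finset.sum_congr rfl hfib, ← Finset.sum_mul, sum_range_choose_pred (by omega),
    Nat.add_sub_cancel]

def gwEquiv (d : ℕ) : GWd n d ≃ {w // w ∈ GFin n d} where
  toFun w := ⟨w.1.reverse, (mem_GFin n d _).2
    ⟨List.isChain_reverse.2 w.2.1, by simp [w.2.2]⟩⟩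
  invFun v := ⟨v.1.reverse, by
    obtain ⟨hc, hl⟩ := (mem_GFin n d _).1 v.2
    exact ⟨List.isChain_reverse.2 hc, by simp [hl]⟩⟩
  left_inv w := Subtype.ext (List.reverse_reverse _)
  right_inv v := Subtype.ext (List.reverse_reverse _)

lemma card_GWd (hn : 3 ≤ n) (d : ℕ) (hd : 1 ≤ d) :
    Fintype.card (GWd n d) = n.choose (d + 1) * fD n d := by
  rw [Fintype.card_congr (gwEquiv n d), Fintype.card_coe, card_GFin n hn d hd]

lemma b2_inner_sum : ∀ d, 1 ≤ d → ∀ l, 1 ≤ l → 3 ≤ l + d →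
    (l - 1) + ∑ i ∈ Finset.range (d - 1), (i + l) * 2 ^ i = (l + d - 3) * 2 ^ (d - 1) + 1 := by
  intro d hd
  induction d, hd using Nat.le_induction with
  | base =>
    intro l hl h3
    simp only [Nat.sub_self, Finset.range_zero, Finset.sum_empty, Nat.add_zero, pow_zero]
    omega
  | succ d hd ih =>
    intro l hl h3
    by_cases h3' : 3 ≤ l + d
    · have hih := ih l hl h3'
      have hr : d + 1 - 1 = (d - 1) + 1 := by omega
      rw [hr, Finset.sum_range_succ]
      have hd1 : d - 1 + 1 = d := by omega
      rw [hd1] at *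
      rw [← Nat.add_assoc, hih]
      have e1 : (l + d - 3) * 2 ^ (d - 1) + 1 + (d - 1 + l) * 2 ^ (d - 1) =
          ((l + d - 3) + (l + d - 1)) * 2 ^ (d - 1) + 1 := by
        have : d - 1 + l = l + d - 1 := by omega
        rw [this]
        ring
      rw [e1]
      have e2 : (l + d - 3) + (l + d - 1) = 2 * (l + (d + 1) - 3) := by omega
      rw [e2]
      have e3 : 2 ^ d = 2 * 2 ^ (d - 1) := by
        conv_lhs => rw [show d = (d - 1) + 1 by omega]
        rw [pow_succ]
        ring
      rw [e3]
      ring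
    · have hl1 : l = 1 := by omega
      have hd1 : d = 1 := by omega
      subst hl1 hd1
      decide

/-- For `1 ≤ l ≤ n-1` the degree-`(n-l)` component of `B_n^(2)` has
dimension `binom(n, l-1)·((l-1) + Σ_{i=0}^{n-l-2} (i+l)·2^i)`; moreover every word of
length ≥ n lies in the defining ideal, so the components of degree ≥ n vanish. -/
theorem statement3 (hn : 3 ≤ n) :
    (∀ l : ℕ, 1 ≤ l → l ≤ n - 1 →
      Module.finrank K ↥(W K n (n - l)) =
        Nat.choose n (l - 1) *
          ((l - 1) + ∑ i ∈ Finset.range (n - l - 1), (i + l) * 2 ^ i)) ∧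
    (∀ w : List (B2Idx n), n ≤ w.length → wordImage K n w = 0) ∧
    (∀ d : ℕ, n ≤ d → W K n d = ⊥) := by
  refine ⟨?_, ?_, ?_⟩
  · intro l hl1 hl2
    set d := n - l with hdd
    have hd1 : 1 ≤ d := by omega
    rw [finrank_W K n d, card_GWd n hn d hd1]
    have hchoose : n.choose (d + 1) = n.choose (l - 1) := by
      have h1 : l - 1 ≤ n := by omega
      have h2 := Nat.choose_symm h1
      rw [show n - (l - 1) = d + 1 by omega] at h2
      exact h2
    have hinner := b2_inner_sum d hd1 l hl1 (by omega)
    rw [show l + d - 3 = n - 3 by omega] at hinner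
    rw [hchoose, hinner]
    rfl
  · intro w hw
    exact wordImage_eq_zero K n (not_chain_of_long n (by omega) hw)
  · intro d hd
    rw [W, Submodule.span_eq_bot]
    rintro x ⟨w, hlen, rfl⟩
    apply wordImage_eq_zero
    apply not_chain_of_long n (by omega)
    omega

end
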